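/- Let ψ♯: R₂ → R₁ be a finite homomorphism of commutative Noetherian Jacobson rings, and let Φ₁: R₁ → R₁ and Φ₂: R₂ → R₂ be ring automorphisms satisfying ψ♯ ∘ Φ₂ = Φ₁ ∘ ψ♯. Let ψ: Spm R₁ → Spm R₂ be the induced map sending a maximal ideal m of R₁ to (ψ♯)⁻¹(m) (which is maximal since ψ♯ is integral), and let Φ₁, Φ₂ also denote the induced homeomorphisms m ↦ Φᵢ(m) of Spm R₁ and Spm R₂. If property (D)_{Spm R₂, Φ₂} holds, then property (D)_{Spm R₁, Φ₁} holds. -/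

import Mathlib

/-- The set of points of `S` fixed by some positive power of `Φ`. -/
def fixInfty {S : Type*} (Φ : S → S) : Set S := ⋃ n > 0, {x | Φ^[n] x = x}

/-- Property `(D)_{S,Φ}`: for every closed subset `Z ⊆ S` with `Φⁿ(Z) = Z` for some
integer `n > 0`, the set `Z ∩ S^{Φ^∞}` is dense in `Z`. -/
def PropertyD {S : Type*} [TopologicalSpace S] (Φ : S ≃ₜ S) : Prop :=
  ∀ Z : Set S, IsClosed Z → (∃ n > 0, (⇑Φ)^[n] '' Z = Z) →
    Z ⊆ closure (Z ∩ fixInfty ⇑Φ)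

namespace DensityAscendsAux

open Ideal

variable {R : Type*} [CommRing R]

/-- The zero locus of an ideal inside the maximal spectrum. -/
def zl (I : Ideal R) : Set (MaximalSpectrum R) := {m | I ≤ m.asIdeal}

/-- The vanishing ideal of a set of maximal ideals. -/
def vi (Z : Set (MaximalSpectrum R)) : Ideal R := ⨅ m ∈ Z, m.asIdeal

lemma mem_zl {I : Ideal R} {m : MaximalSpectrum R} : m ∈ zl I ↔ I ≤ m.asIdeal := Iff.rfl

lemma zl_anti {A B : Ideal R} (h : A ≤ B) : zl B ⊆ zl A := fun _ hm => h.trans hm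

lemma le_vi {I : Ideal R} {Z : Set (MaximalSpectrum R)} (h : ∀ m ∈ Z, I ≤ m.asIdeal) :
    I ≤ vi Z := le_iInf₂ h

lemma vi_le {Z : Set (MaximalSpectrum R)} {m : MaximalSpectrum R} (h : m ∈ Z) :
    vi Z ≤ m.asIdeal := iInf₂_le m h

lemma zl_preimage (I : Ideal R) :
    zl I = MaximalSpectrum.toPrimeSpectrum ⁻¹' PrimeSpectrum.zeroLocus (I : Set R) := by
  ext m
  simp only [zl, Set.mem_setOf_eq, Set.mem_preimage, PrimeSpectrum.mem_zeroLocus,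
    MaximalSpectrum.toPrimeSpectrum]
  exact (SetLike.coe_subset_coe).symm

lemma isClosed_zl (I : Ideal R) : IsClosed (zl I) := by
  rw [zl_preimage]
  exact (PrimeSpectrum.isClosed_zeroLocus _).preimage MaximalSpectrum.toPrimeSpectrum_continuous

lemma eq_zl_vi_of_isClosed {Z : Set (MaximalSpectrum R)} (h : IsClosed Z) : zl (vi Z) = Z := by
  obtain ⟨t, ht, rfl⟩ := isClosed_induced_iff.mp h
  obtain ⟨s, rfl⟩ := (PrimeSpectrum.isClosed_iff_zeroLocus t).mp ht
  have hJ : MaximalSpectrum.toPrimeSpectrum ⁻¹' PrimeSpectrum.zeroLocus s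
      = zl (Ideal.span s) := by
    ext m
    simp only [Set.mem_preimage, PrimeSpectrum.mem_zeroLocus, zl, Set.mem_setOf_eq,
      MaximalSpectrum.toPrimeSpectrum]
    exact (Ideal.span_le).symm
  rw [hJ]
  exact le_antisymm (zl_anti (le_vi fun m hm => hm)) (fun m hm => vi_le hm)

lemma vi_radical (Z : Set (MaximalSpectrum R)) : (vi Z).radical = vi Z := by
  refine le_antisymm (fun x hx => ?_) Ideal.le_radical
  obtain ⟨n, hn⟩ := hx
  simp only [vi, Ideal.mem_iInf] at hn ⊢
  intro m hm
  exact m.isMaximal.isPrime.mem_of_pow_mem n (hn m hm)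

lemma vi_zl_eq_jacobson (I : Ideal R) : vi (zl I) = I.jacobson := by
  have hdef : I.jacobson = sInf {J : Ideal R | I ≤ J ∧ J.IsMaximal} := rfl
  rw [hdef]
  refine le_antisymm (le_sInf fun J hJ => ?_) (le_vi fun m hm => sInf_le ⟨hm, m.isMaximal⟩)
  exact vi_le (show (⟨J, hJ.2⟩ : MaximalSpectrum R) ∈ zl I from hJ.1)

lemma zl_inj [IsJacobsonRing R] {A B : Ideal R} (hA : A.radical = A) (hB : B.radical = B)
    (h : zl A = zl B) : A = B := by
  have h2 := congrArg vi h
  rw [vi_zl_eq_jacobson, vi_zl_eq_jacobson, ← Ideal.radical_eq_jacobson,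
    ← Ideal.radical_eq_jacobson, hA, hB] at h2
  exact h2

lemma map_equiv_eq_comap (e : R ≃+* R) (I : Ideal R) :
    I.map (e : R →+* R) = I.comap (e.symm : R →+* R) := by
  apply le_antisymm
  · rw [Ideal.map_le_iff_le_comap]
    intro x hx
    rw [Ideal.mem_comap, Ideal.mem_comap]
    simpa using hx
  · intro x hx
    rw [Ideal.mem_comap] at hx
    have h := Ideal.mem_map_of_mem (e : R →+* R) hx
    simpa using h

lemma mem_map_equiv' (e : R ≃+* R) {I : Ideal R} {x : R} :
    x ∈ I.map (e : R →+* R) ↔ e.symm x ∈ I := by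
  rw [map_equiv_eq_comap]; exact Ideal.mem_comap

lemma map_equiv_injective (e : R ≃+* R) :
    Function.Injective (fun I : Ideal R => I.map (e : R →+* R)) := by
  intro A B h
  simp only [map_equiv_eq_comap] at h
  exact Ideal.comap_injective_of_surjective _ e.symm.surjective h

lemma radical_comap {S : Type*} [CommRing S] (f : R →+* S) {A : Ideal S}
    (hA : A.radical = A) : (A.comap f).radical = A.comap f := by
  refine le_antisymm (fun x hx => ?_) Ideal.le_radical
  obtain ⟨n, hn⟩ := hx
  rw [Ideal.mem_comap, map_pow] at hn
  rw [Ideal.mem_comap, ← hA]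
  exact ⟨n, hn⟩

lemma radical_iterate_map (e : R ≃+* R) (k : ℕ) :
    ∀ J : Ideal R, J.radical = J →
      ((Ideal.map (e : R →+* R))^[k] J).radical = (Ideal.map (e : R →+* R))^[k] J := by
  induction k with
  | zero => intro J h; simpa
  | succ a ih =>
    intro J h
    rw [Function.iterate_succ_apply', map_equiv_eq_comap]
    exact radical_comap _ (ih J h)

lemma map_mem_minimalPrimes (e : R ≃+* R) {I p : Ideal R} (hp : p ∈ I.minimalPrimes) :
    p.map (e : R →+* R) ∈ (I.map (e : R →+* R)).minimalPrimes := by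
  rw [map_equiv_eq_comap, map_equiv_eq_comap,
    Ideal.comap_minimalPrimes_eq_of_surjective e.symm.surjective]
  exact ⟨p, hp, rfl⟩

lemma iterate_map_mem_minimalPrimes (e : R ≃+* R) {I p : Ideal R}
    (hp : p ∈ I.minimalPrimes) (k : ℕ) :
    (Ideal.map (e : R →+* R))^[k] p ∈ ((Ideal.map (e : R →+* R))^[k] I).minimalPrimes := by
  induction k with
  | zero => simpa
  | succ n ih =>
    rw [Function.iterate_succ_apply', Function.iterate_succ_apply']
    exact map_mem_minimalPrimes e ih

lemma minimalPrimes_finite [IsNoetherianRing R] (I : Ideal R) : I.minimalPrimes.Finite := by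
  rw [Ideal.minimalPrimes_eq_comap]
  exact (minimalPrimes.finite_of_isNoetherianRing _).image _

lemma exists_pos_iterate_eq {α : Type*} {g : α → α} (hg : Function.Injective g)
    {F : Set α} (hF : F.Finite) (hmaps : ∀ x ∈ F, g x ∈ F) {x : α} (hx : x ∈ F) :
    ∃ k > 0, g^[k] x = x := by
  have hmem : ∀ i, g^[i] x ∈ F := by
    intro i
    induction i with
    | zero => simpa
    | succ n ih => rw [Function.iterate_succ_apply']; exact hmaps _ ih
  haveI := hF.to_subtype
  obtain ⟨i, j, hne, heq⟩ :=
    Finite.exists_ne_map_eq_of_infinite (fun i : ℕ => (⟨g^[i] x, hmem i⟩ : F))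
  have heq' : g^[i] x = g^[j] x := congrArg Subtype.val heq
  rcases hne.lt_or_gt with hij | hij
  · refine ⟨j - i, by omega, ?_⟩
    have h5 : g^[i] (g^[j-i] x) = g^[i] x := by
      rw [← Function.iterate_add_apply, Nat.add_sub_cancel' hij.le, ← heq']
    exact (hg.iterate i) h5
  · refine ⟨i - j, by omega, ?_⟩
    have h5 : g^[j] (g^[i-j] x) = g^[j] x := by
      rw [← Function.iterate_add_apply, Nat.add_sub_cancel' hij.le, heq']
    exact (hg.iterate j) h5

lemma image_equiv_zl (e : R ≃+* R) (Φ' : MaximalSpectrum R ≃ₜ MaximalSpectrum R)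
    (hΦ' : ∀ m, (Φ' m).asIdeal = m.asIdeal.map (e : R →+* R)) (J : Ideal R) :
    ⇑Φ' '' zl J = zl (J.map (e : R →+* R)) := by
  ext m
  simp only [Set.mem_image]
  constructor
  · rintro ⟨m', hm', rfl⟩
    show J.map (e : R →+* R) ≤ _
    rw [hΦ' m', map_equiv_eq_comap, map_equiv_eq_comap]
    exact Ideal.comap_mono hm'
  · intro hm
    refine ⟨Φ'.symm m, ?_, Φ'.apply_symm_apply m⟩
    have h2 : m.asIdeal = ((Φ'.symm m).asIdeal).map (e : R →+* R) := by
      rw [← hΦ' (Φ'.symm m), Φ'.apply_symm_apply]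
    intro x hx
    have h3 : e x ∈ J.map (e : R →+* R) := Ideal.mem_map_of_mem _ hx
    have h4 := hm h3
    rw [h2, mem_map_equiv' e] at h4
    simpa using h4

lemma image_iterate_zl (e : R ≃+* R) (Φ' : MaximalSpectrum R ≃ₜ MaximalSpectrum R)
    (hΦ' : ∀ m, (Φ' m).asIdeal = m.asIdeal.map (e : R →+* R)) (J : Ideal R) (k : ℕ) :
    (⇑Φ')^[k] '' zl J = zl ((Ideal.map (e : R →+* R))^[k] J) := by
  induction k with
  | zero => simp
  | succ n ih =>
    rw [Function.iterate_succ', Function.iterate_succ']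
    rw [Set.image_comp]
    rw [ih, image_equiv_zl e Φ' hΦ']
    rfl

section Image

variable {R₁ R₂ : Type*} [CommRing R₁] [CommRing R₂]

lemma image_zl (ψs : R₂ →+* R₁) (hfin : ψs.Finite)
    (ψ : MaximalSpectrum R₁ → MaximalSpectrum R₂)
    (hψ : ∀ m : MaximalSpectrum R₁, (ψ m).asIdeal = m.asIdeal.comap ψs)
    (I : Ideal R₁) : ψ '' zl I = zl (I.comap ψs) := by
  letI : Algebra R₂ R₁ := ψs.toAlgebra
  haveI : Module.Finite R₂ R₁ := hfin
  have halg : algebraMap R₂ R₁ = ψs := rfl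
  ext q
  constructor
  · rintro ⟨m, hm, rfl⟩
    show I.comap ψs ≤ _
    rw [hψ]
    exact Ideal.comap_mono hm
  · intro hq
    haveI : q.asIdeal.IsPrime := q.isMaximal.isPrime
    obtain ⟨Q, hQI, hQprime, hQcomap⟩ :=
      Ideal.exists_ideal_over_prime_of_isIntegral q.asIdeal I (by rw [halg]; exact hq)
    haveI := hQprime
    have hQmax : Q.IsMaximal := by
      refine Ideal.isMaximal_of_isIntegral_of_isMaximal_comap (R := R₂) Q ?_
      rw [hQcomap]
      exact q.isMaximal
    refine ⟨⟨Q, hQmax⟩, hQI, ?_⟩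
    have h6 : (ψ ⟨Q, hQmax⟩).asIdeal = q.asIdeal := by
      rw [hψ, ← halg, hQcomap]
    exact MaximalSpectrum.ext h6

variable [IsNoetherianRing R₁] [IsNoetherianRing R₂]
  [IsJacobsonRing R₁] [IsJacobsonRing R₂]

lemma key (ψs : R₂ →+* R₁) (hfin : ψs.Finite)
    (Φ₁ : R₁ ≃+* R₁) (Φ₂ : R₂ ≃+* R₂)
    (hcomm : ψs.comp (Φ₂ : R₂ →+* R₂) = (Φ₁ : R₁ →+* R₁).comp ψs)
    (ψ : MaximalSpectrum R₁ → MaximalSpectrum R₂)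
    (hψ : ∀ m : MaximalSpectrum R₁, (ψ m).asIdeal = m.asIdeal.comap ψs)
    (Φ₁' : MaximalSpectrum R₁ ≃ₜ MaximalSpectrum R₁)
    (hΦ₁' : ∀ m : MaximalSpectrum R₁, (Φ₁' m).asIdeal = m.asIdeal.map (Φ₁ : R₁ →+* R₁))
    (Φ₂' : MaximalSpectrum R₂ ≃ₜ MaximalSpectrum R₂)
    (hΦ₂' : ∀ m : MaximalSpectrum R₂, (Φ₂' m).asIdeal = m.asIdeal.map (Φ₂ : R₂ →+* R₂))
    (hD : PropertyD Φ₂')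
    (p : Ideal R₁) (hpprime : p.IsPrime) (N : ℕ) (hN : 0 < N)
    (hpN : (Ideal.map (Φ₁ : R₁ →+* R₁))^[N] p = p) :
    zl p ⊆ closure (zl p ∩ fixInfty ⇑Φ₁') := by
  letI : Algebra R₂ R₁ := ψs.toAlgebra
  haveI : Module.Finite R₂ R₁ := hfin
  have halg : algebraMap R₂ R₁ = ψs := rfl
  haveI := hpprime
  -- commutation of the automorphisms with ψs, on elements and on ideals
  have hkey : ∀ y : R₂, Φ₁.symm (ψs y) = ψs (Φ₂.symm y) := by
    intro y
    have h7 := RingHom.congr_fun hcomm (Φ₂.symm y)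
    simp only [RingHom.coe_comp, Function.comp_apply, RingEquiv.coe_toRingHom] at h7
    rw [RingEquiv.apply_symm_apply] at h7
    rw [h7, RingEquiv.symm_apply_apply]
  have hcommI : ∀ I : Ideal R₁,
      (I.map (Φ₁ : R₁ →+* R₁)).comap ψs = (I.comap ψs).map (Φ₂ : R₂ →+* R₂) := by
    intro I
    ext x
    rw [Ideal.mem_comap, mem_map_equiv' Φ₁, mem_map_equiv' Φ₂, Ideal.mem_comap, hkey]
  have hsemi : Function.Semiconj ψ ⇑Φ₁' ⇑Φ₂' := by
    intro m
    apply MaximalSpectrum.ext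
    rw [hψ, hΦ₂', hψ, hΦ₁', hcommI]
  have hsemiI : Function.Semiconj (Ideal.comap ψs)
      (Ideal.map (Φ₁ : R₁ →+* R₁)) (Ideal.map (Φ₂ : R₂ →+* R₂)) := fun I => hcommI I
  have hqprime : (p.comap ψs).IsPrime := Ideal.IsPrime.comap ψs
  set q : Ideal R₂ := p.comap ψs with hq
  have hqN : (Ideal.map (Φ₂ : R₂ →+* R₂))^[N] q = q := by
    have h8 := (hsemiI.iterate_right N) p
    rw [hpN] at h8
    exact h8.symm
  have hW : ψ '' zl p = zl q := image_zl ψs hfin ψ hψ p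
  have hWdense : zl q ⊆ closure (zl q ∩ fixInfty ⇑Φ₂') := by
    refine hD (zl q) (isClosed_zl q) ⟨N, hN, ?_⟩
    rw [image_iterate_zl Φ₂ Φ₂' hΦ₂' q N, hqN]
  intro m hm
  rw [mem_closure_iff]
  intro U hU hmU
  set C : Set (MaximalSpectrum R₁) := zl p ∩ Uᶜ with hC
  have hCclosed : IsClosed C := (isClosed_zl p).inter hU.isClosed_compl
  set IC : Ideal R₁ := vi C with hIC
  have hCzl : zl IC = C := eq_zl_vi_of_isClosed hCclosed
  have hpIC : p ≤ IC := le_vi fun m' hm' => hm'.1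
  have hICrad : IC.radical = IC := vi_radical C
  have hqICne : IC.comap ψs ≠ q := by
    intro heq
    have hpne : p ≠ IC := by
      intro h
      have h9 : m ∈ C := by rw [← hCzl, ← h]; exact hm
      exact h9.2 hmU
    obtain ⟨x, hxIC, hxp⟩ := SetLike.exists_of_lt (lt_of_le_of_ne hpIC hpne)
    have hSfin := minimalPrimes_finite IC
    have hsInf : sInf IC.minimalPrimes = IC := by rw [Ideal.sInf_minimalPrimes, hICrad]
    have h12 : IC.comap ψs = ⨅ J ∈ IC.minimalPrimes, J.comap ψs := by
      conv_lhs => rw [← hsInf]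
      exact Ideal.comap_sInf _ _
    have hq2 : hSfin.toFinset.inf (fun J => J.comap ψs) ≤ q := by
      rw [Finset.inf_eq_iInf]
      simp only [Set.Finite.mem_toFinset]
      rw [← h12, heq]
    obtain ⟨p', hp'mem, hp'le⟩ := hqprime.inf_le'.mp hq2
    rw [Set.Finite.mem_toFinset] at hp'mem
    haveI hp'prime : p'.IsPrime := hp'mem.1.1
    have hICp' : IC ≤ p' := hp'mem.1.2
    have hlt : p.comap (algebraMap R₂ R₁) < p'.comap (algebraMap R₂ R₁) :=
      Ideal.comap_lt_comap_of_integral_mem_sdiff (hpIC.trans hICp') ⟨hICp' hxIC, hxp⟩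
        (Algebra.IsIntegral.isIntegral x)
    rw [halg] at hlt
    exact hlt.not_ge hp'le
  have hsub : zl (IC.comap ψs) ⊆ zl q := zl_anti (Ideal.comap_mono hpIC)
  have hneq : zl (IC.comap ψs) ≠ zl q := fun h =>
    hqICne (zl_inj (radical_comap ψs hICrad) (hq ▸ radical_comap ψs hpprime.radical) h)
  obtain ⟨m', hm'W, hm'not⟩ := Set.exists_of_ssubset (HasSubset.Subset.ssubset_of_ne hsub hneq)
  obtain ⟨y, hy1, hy2⟩ := (mem_closure_iff.mp (hWdense hm'W)) _ (isClosed_zl _).isOpen_compl hm'not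
  obtain ⟨x, hxzl, hxy⟩ : ∃ x ∈ zl p, ψ x = y := by
    have h10 : y ∈ ψ '' zl p := by rw [hW]; exact hy2.1
    exact h10
  have himC : ψ '' C = zl (IC.comap ψs) := by
    rw [← hCzl]; exact image_zl ψs hfin ψ hψ IC
  have hxU : x ∈ U := by
    by_contra hxU
    have h11 : ψ x ∈ ψ '' C := ⟨x, ⟨hxzl, hxU⟩, rfl⟩
    rw [hxy, himC] at h11
    exact hy1 h11
  obtain ⟨k, hk, hyk⟩ : ∃ k > 0, (⇑Φ₂')^[k] y = y := by
    have := hy2.2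
    simpa [fixInfty] using this
  set M := N * k with hM
  have hMpos : 0 < M := Nat.mul_pos hN hk
  have hpM : (Ideal.map (Φ₁ : R₁ →+* R₁))^[M] p = p := by
    rw [hM, Function.iterate_mul]
    exact Function.iterate_fixed hpN k
  have hzlpM : (⇑Φ₁')^[M] '' zl p = zl p := by
    rw [image_iterate_zl Φ₁ Φ₁' hΦ₁' p M, hpM]
  have hyM : (⇑Φ₂')^[M] y = y := by
    rw [hM, Nat.mul_comm, Function.iterate_mul]
    exact Function.iterate_fixed hyk N
  set t : Ideal R₂ := y.asIdeal with ht
  set F : Set (MaximalSpectrum R₁) := {x' | x' ∈ zl p ∧ ψ x' = y} with hF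
  have hFfiber : F ⊆ zl (t.map ψs) := by
    rintro x' ⟨_, hx'⟩
    show t.map ψs ≤ x'.asIdeal
    rw [Ideal.map_le_iff_le_comap, ← hψ, hx']
  have hasinj : Function.Injective (MaximalSpectrum.asIdeal (R := R₁)) := fun a b h =>
    MaximalSpectrum.ext h
  have hfibfin : (zl (t.map ψs)).Finite := by
    refine Set.Finite.of_finite_image ?_ hasinj.injOn
    refine (minimalPrimes_finite (t.map ψs)).subset ?_
    rintro _ ⟨m'', hm'', rfl⟩
    constructor
    · exact ⟨m''.isMaximal.isPrime, hm''⟩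
    · rintro J ⟨hJprime, hJt⟩ hJle
      haveI := hJprime
      have hcomapJ : J.comap ψs = t := by
        have h1 : t ≤ J.comap ψs := by rw [← Ideal.map_le_iff_le_comap]; exact hJt
        have h2 : J.comap ψs ≠ ⊤ := fun h =>
          hJprime.ne_top (Ideal.eq_top_iff_one J |>.mpr (by
            have := Ideal.eq_top_iff_one (J.comap ψs) |>.mp h
            rw [Ideal.mem_comap, map_one] at this
            exact this))
        exact (y.isMaximal.eq_of_le h2 h1).symm
      have hJmax : J.IsMaximal := by
        refine Ideal.isMaximal_of_isIntegral_of_isMaximal_comap (R := R₂) J ?_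
        rw [halg, hcomapJ]
        exact y.isMaximal
      exact (hJmax.eq_of_le m''.isMaximal.ne_top hJle).ge
  have hFfin : F.Finite := hfibfin.subset hFfiber
  have hmapsF : ∀ x' ∈ F, (⇑Φ₁')^[M] x' ∈ F := by
    rintro x' ⟨hx'zl, hx'y⟩
    refine ⟨?_, ?_⟩
    · rw [← hzlpM]; exact ⟨x', hx'zl, rfl⟩
    · rw [(hsemi.iterate_right M) x', hx'y, hyM]
  have hΦinj : Function.Injective ((⇑Φ₁')^[M]) := Φ₁'.injective.iterate M
  obtain ⟨j, hj, hjx⟩ := exists_pos_iterate_eq hΦinj hFfin hmapsF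
    (show x ∈ F from ⟨hxzl, hxy⟩)
  refine ⟨x, hxU, hxzl, ?_⟩
  have hfix : (⇑Φ₁')^[M * j] x = x := by
    rw [Function.iterate_mul]
    exact hjx
  simp only [fixInfty, Set.mem_iUnion, Set.mem_setOf_eq]
  exact ⟨M * j, Nat.mul_pos hMpos hj, hfix⟩

end Image

end DensityAscendsAux

open DensityAscendsAux
theorem density_property_ascends_along_finite_ring_hom
    {R₁ R₂ : Type*} [CommRing R₁] [CommRing R₂]
    [IsNoetherianRing R₁] [IsNoetherianRing R₂]
    [IsJacobsonRing R₁] [IsJacobsonRing R₂]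
    (ψs : R₂ →+* R₁) (hfin : ψs.Finite)
    (Φ₁ : R₁ ≃+* R₁) (Φ₂ : R₂ ≃+* R₂)
    (hcomm : ψs.comp (Φ₂ : R₂ →+* R₂) = (Φ₁ : R₁ →+* R₁).comp ψs)
    (ψ : MaximalSpectrum R₁ → MaximalSpectrum R₂)
    (hψ : ∀ m : MaximalSpectrum R₁, (ψ m).asIdeal = m.asIdeal.comap ψs)
    (Φ₁' : MaximalSpectrum R₁ ≃ₜ MaximalSpectrum R₁)
    (hΦ₁' : ∀ m : MaximalSpectrum R₁, (Φ₁' m).asIdeal = m.asIdeal.map (Φ₁ : R₁ →+* R₁))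
    (Φ₂' : MaximalSpectrum R₂ ≃ₜ MaximalSpectrum R₂)
    (hΦ₂' : ∀ m : MaximalSpectrum R₂, (Φ₂' m).asIdeal = m.asIdeal.map (Φ₂ : R₂ →+* R₂))
    (hD : PropertyD Φ₂') : PropertyD Φ₁' := by
  intro Z hZc hZstab m hm
  obtain ⟨n, hn, hZn⟩ := hZstab
  set I : Ideal R₁ := vi Z with hI
  have hzlI : zl I = Z := eq_zl_vi_of_isClosed hZc
  have hIrad : I.radical = I := vi_radical Z
  have hIn : (Ideal.map (Φ₁ : R₁ →+* R₁))^[n] I = I := by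
    refine zl_inj (radical_iterate_map Φ₁ n I hIrad) hIrad ?_
    rw [← image_iterate_zl Φ₁ Φ₁' hΦ₁' I n, hzlI]
    exact hZn
  have hmI : I ≤ m.asIdeal := by rw [← hzlI] at hm; exact hm
  haveI : m.asIdeal.IsPrime := m.isMaximal.isPrime
  obtain ⟨p, hpmem, hpm⟩ := Ideal.exists_minimalPrimes_le hmI
  have hgmaps : ∀ p' ∈ I.minimalPrimes,
      (Ideal.map (Φ₁ : R₁ →+* R₁))^[n] p' ∈ I.minimalPrimes := by
    intro p' hp'
    have h := iterate_map_mem_minimalPrimes Φ₁ hp' n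
    rwa [hIn] at h
  have hginj : Function.Injective ((Ideal.map (Φ₁ : R₁ →+* R₁))^[n]) :=
    (map_equiv_injective Φ₁).iterate n
  obtain ⟨k, hk, hgk⟩ := exists_pos_iterate_eq hginj (minimalPrimes_finite I) hgmaps hpmem
  have hpNk : (Ideal.map (Φ₁ : R₁ →+* R₁))^[n * k] p = p := by
    rw [Function.iterate_mul]
    exact hgk
  haveI hpprime : p.IsPrime := hpmem.1.1
  have hkey := key ψs hfin Φ₁ Φ₂ hcomm ψ hψ Φ₁' hΦ₁' Φ₂' hΦ₂' hD p hpprime (n * k)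
    (Nat.mul_pos hn hk) hpNk
  have hmzlp : m ∈ zl p := hpm
  refine closure_mono ?_ (hkey hmzlp)
  refine Set.inter_subset_inter_left _ ?_
  rw [← hzlI]
  exact zl_anti hpmem.1.2
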